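/- arXiv:cs/0512061 — 4 statements merged into one kernel-verified Lean document; each statement's English description precedes it below -/
import Mathlib

section
/- The state invariant of the Down procedure is an antichain: if X is an antichain in a rooted tree P (no element is a proper ancestor of another), then Down(X, y) := Child({x ∈ X : label(x) = label(y)}) ∪ {x ∈ X : label(x) ≠ label(y)} is also an antichain. -/
open Finset
open scoped Classical

/-- A rooted tree on `n` nodes given by a parent function. -/
structure RTree (n : ℕ) where
  parent : Fin n → Fin n
  root : Fin n
  parent_root : parent root = root
  wf : ∀ v, ∃ k, parent^[k] v = root

namespace RTree

variable {n : ℕ}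

/-- `x` is an ancestor of `v` (possibly `x = v`). -/
def Anc (T : RTree n) (x v : Fin n) : Prop := ∃ k, T.parent^[k] v = x

/-- `z` is a child of `y`. -/
def IsChild (T : RTree n) (z y : Fin n) : Prop := T.parent z = y ∧ z ≠ y

/-- The number of nodes in the subtree rooted at `y`. -/
noncomputable def size (T : RTree n) (y : Fin n) : ℕ :=
  (Finset.univ.filter fun v => T.Anc y v).card

/-- A leaf is a node with no children. -/
def IsLeaf (T : RTree n) (v : Fin n) : Prop := ∀ z, T.parent z = v → z = v

noncomputable def leaves (T : RTree n) : Finset (Fin n) :=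
  Finset.univ.filter fun v => T.IsLeaf v

noncomputable def depth (T : RTree n) (v : Fin n) : ℕ := Nat.find (T.wf v)

/-- The list of labels on the path from the root down to `v`. -/
noncomputable def pathLabels {α : Type*} (T : RTree n) (lab : Fin n → α) (v : Fin n) :
    List α :=
  (List.range (T.depth v + 1)).map fun i => lab (T.parent^[T.depth v - i] v)

/-- The number of light edges on the root-to-`y` path (`hv x = true` iff `x` is heavy). -/
noncomputable def lightdepth (T : RTree n) (hv : Fin n → Bool) (y : Fin n) : ℕ :=
  (Finset.univ.filter fun x => T.Anc x y ∧ x ≠ T.root ∧ hv x = false).card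

end RTree

/-- The `Down` procedure: children of matched nodes together with unmatched nodes. -/
def Down {m : ℕ} {α : Type*} (P : RTree m) (lab : Fin m → α) (X : Set (Fin m)) (a : α) :
    Set (Fin m) :=
  {z | ∃ x ∈ X, lab x = a ∧ P.IsChild z x} ∪ {x ∈ X | lab x ≠ a}

lemma anc_antisymm {m : ℕ} (P : RTree m) {x y : Fin m}
    (h1 : P.Anc x y) (h2 : P.Anc y x) : x = y := by
  obtain ⟨k, hk⟩ := h1
  obtain ⟨l, hl⟩ := h2
  have hcyc : P.parent^[k + l] x = x := by
    rw [Function.iterate_add_apply, hl, hk]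
  rcases Nat.eq_zero_or_pos (k + l) with h0 | hpos
  · obtain ⟨hk0, hl0⟩ := Nat.add_eq_zero.mp h0
    subst hk0
    simpa using hk.symm
  · obtain ⟨N, hN⟩ := P.wf x
    -- iterate the cycle enough times
    have hmult : ∀ j, P.parent^[(k + l) * j] x = x := by
      intro j
      induction j with
      | zero => simp
      | succ j ih =>
        rw [Nat.mul_succ, Function.iterate_add_apply, hcyc, ih]
    have hge : (k + l) * N ≥ N := Nat.le_mul_of_pos_left N hpos
    have hroot : x = P.root := by
      have := hmult N
      rw [show (k + l) * N = ((k + l) * N - N) + N by omega,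
        Function.iterate_add_apply, hN,
        Function.iterate_fixed P.parent_root] at this
      exact this.symm
    have hyroot : y = P.root := by
      have : P.parent^[l] x = y := hl
      rw [hroot, Function.iterate_fixed P.parent_root] at this
      exact this.symm
    rw [hroot, hyroot]

/-- The `Down` procedure preserves antichains: if no node of `X` is a proper ancestor of
another node of `X`, the same holds for `Down(X, y)`. -/
theorem down_antichain (m : ℕ) {α : Type*} (P : RTree m) (lab : Fin m → α)
    (X : Set (Fin m)) (a : α)
    (hX : ∀ x ∈ X, ∀ z ∈ X, P.Anc x z → x = z) :
    ∀ x ∈ Down P lab X a, ∀ z ∈ Down P lab X a, P.Anc x z → x = z := by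
  rintro x hx z hz ⟨k, hk⟩
  rcases hx with ⟨x', hx'X, hlx', hpx, hnex⟩ | ⟨hxX, hlx⟩ <;>
    rcases hz with ⟨z', hz'X, hlz', hpz, hnez⟩ | ⟨hzX, hlz⟩
  · -- both children
    rcases k with _ | k
    · simpa using hk.symm
    · have hz' : P.parent^[k] z' = x := by
        rw [Function.iterate_succ_apply, hpz] at hk; exact hk
      have hAnc : P.Anc x' z' := ⟨k + 1, by
        rw [Function.iterate_succ_apply', hz', hpx]⟩
      have heq : x' = z' := hX x' hx'X z' hz'X hAnc
      have h1 : P.Anc x x' := ⟨k, by rw [heq]; exact hz'⟩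
      have h2 : P.Anc x' x := ⟨1, by simpa using hpx⟩
      exact absurd (anc_antisymm P h1 h2) hnex
  · -- x child, z in X unmatched
    have hAnc : P.Anc x' z := ⟨k + 1, by
      rw [Function.iterate_succ_apply', hk, hpx]⟩
    have := hX x' hx'X z hzX hAnc
    exact absurd (this ▸ hlx') hlz
  · -- x in X, z child
    rcases k with _ | k
    · simpa using hk.symm
    · have hz' : P.Anc x z' := ⟨k, by
        rw [← hk, Function.iterate_succ_apply, hpz]⟩
      have := hX x hxX z' hz'X hz'
      exact absurd (this ▸ hlz') hlx
  · exact hX x hxX z hzX ⟨k, hk⟩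
end

section
/- Soundness of the Down-based traversal: let T be a rooted labeled tree and define states along root-to-node paths by X_{root(T)} = Down({root(P)}, root(T)) and X_z = Down(X_y, z) for each child z of y. Then for every node y of T and every x ∈ X_y, the label sequence of the root-to-parent(x) path in P is a subsequence of the label sequence of the root-to-y path in T. -/
open Finset
open scoped Classical

namespace RTree

variable {n : ℕ}

theorem depth_root (T : RTree n) : T.depth T.root = 0 := by
  simpa [depth] using Nat.find_eq_zero (T.wf T.root) |>.2 rfl

theorem depth_spec (T : RTree n) (v : Fin n) : T.parent^[T.depth v] v = T.root :=
  Nat.find_spec (T.wf v)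

theorem depth_parent (T : RTree n) (v : Fin n) (hv : v ≠ T.root) :
    T.depth v = T.depth (T.parent v) + 1 := by
  have h1 : T.depth v ≤ T.depth (T.parent v) + 1 := by
    apply Nat.find_le
    rw [Function.iterate_succ_apply]
    exact T.depth_spec (T.parent v)
  have hpos : 0 < T.depth v := by
    rcases Nat.eq_zero_or_pos (T.depth v) with h | h
    · exfalso; apply hv; have := T.depth_spec v; rwa [h, Function.iterate_zero_apply] at this
    · exact h
  have h2 : T.depth (T.parent v) ≤ T.depth v - 1 := by
    apply Nat.find_le
    have := T.depth_spec v
    rwa [← Nat.succ_pred_eq_of_pos hpos, Function.iterate_succ_apply] at this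
  omega

theorem pathLabels_root {α : Type*} (T : RTree n) (lab : Fin n → α) :
    T.pathLabels lab T.root = [lab T.root] := by
  simp [pathLabels, depth_root]

theorem pathLabels_of_ne_root {α : Type*} (T : RTree n) (lab : Fin n → α) (v : Fin n)
    (hv : v ≠ T.root) :
    T.pathLabels lab v = T.pathLabels lab (T.parent v) ++ [lab v] := by
  have hd := T.depth_parent v hv
  set d' := T.depth (T.parent v) with hd'
  unfold pathLabels
  rw [hd, ← hd']
  rw [show d' + 1 + 1 = (d' + 1) + 1 from rfl, List.range_succ, List.map_append]
  congr 1
  · apply List.map_congr_left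
    intro i hi
    rw [List.mem_range] at hi
    have : d' + 1 - i = (d' - i) + 1 := by omega
    rw [this, Function.iterate_succ_apply]
  · simp

end RTree

theorem pathLabels_parent_sublist {m : ℕ} {α : Type*} (P : RTree m) (lp : Fin m → α)
    (x : Fin m) :
    (if x = P.root then ([] : List α) else P.pathLabels lp (P.parent x)) ++ [lp x]
      = P.pathLabels lp x := by
  by_cases h : x = P.root
  · subst h; simp [RTree.pathLabels_root]
  · simp [h, (P.pathLabels_of_ne_root lp x h).symm]

/-- Soundness of the `Down`-based traversal (Lemma 1): if the states along `T` are
computed by `Down` starting from `{root(P)}`, then every `x` in the state at `y`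
satisfies `path(parent(x)) ⊑ path(y)` (with the empty path for `x = root(P)`). -/
theorem down_traversal_sound (m n : ℕ) {α : Type*} (P : RTree m) (T : RTree n)
    (lp : Fin m → α) (lt : Fin n → α) (X : Fin n → Set (Fin m))
    (hroot : X T.root = Down P lp {P.root} (lt T.root))
    (hstep : ∀ z, z ≠ T.root → X z = Down P lp (X (T.parent z)) (lt z))
    (y : Fin n) (x : Fin m) (hx : x ∈ X y) :
    (if x = P.root then ([] : List α) else P.pathLabels lp (P.parent x)).Sublist
      (T.pathLabels lt y) := by
  suffices H : ∀ d (y : Fin n) (x : Fin m), x ∈ X y → T.depth y = d →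
      (if x = P.root then ([] : List α) else P.pathLabels lp (P.parent x)).Sublist
        (T.pathLabels lt y) from H _ y x hx rfl
  clear hx y x
  intro d
  induction d using Nat.strong_induction_on with
  | _ d ih =>
  intro y x hx hd
  by_cases hy : y = T.root
  · subst hy
    rw [hroot] at hx
    rcases hx with ⟨x', hx', hlab, hchild⟩ | ⟨hx', hne⟩
    · -- x is a child of P.root, matched
      rcases hx' with rfl
      have hxr : x ≠ P.root := hchild.2
      rw [if_neg hxr, hchild.1, RTree.pathLabels_root, T.pathLabels_root, hlab]
    · rcases hx' with rfl
      rw [if_pos rfl]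
      exact List.nil_sublist _
  · rw [hstep y hy] at hx
    have hdpar : T.depth (T.parent y) < d := by
      have := T.depth_parent y hy; omega
    rw [T.pathLabels_of_ne_root lt y hy]
    rcases hx with ⟨x', hx', hlab, hchild⟩ | ⟨hx', hne⟩
    · have hxr : x ≠ P.root := by
        rintro rfl
        exact hchild.2 (by rw [← hchild.1, P.parent_root])
      rw [if_neg hxr, hchild.1]
      have hsub := ih (T.depth (T.parent y)) hdpar (T.parent y) x' hx' rfl
      have := pathLabels_parent_sublist P lp x'
      rw [← this, hlab]
      exact hsub.append (List.Sublist.refl _)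
    · have hsub := ih (T.depth (T.parent y)) hdpar (T.parent y) x hx' rfl
      exact hsub.trans (List.sublist_append_left _ _)
end

section
/- Up inverts Down: for the node-dictionary representation, if X is an antichain state in P and y is a node, then applying the Up procedure to Down(X, y) (with respect to y) recovers X; concretely, defining D = Child({x ∈ X : label(x) = label(y)}) ∪ {x ∈ X : label(x) ≠ label(y)} together with the removed set R = {x ∈ X : label(x) = label(y)}, one has (D \ Child(R)) ∪ R = X. -/
open Finset
open scoped Classical

/-- `Up` inverts `Down` (Lemma 4): for an antichain `X`, with `R` the matched nodes and
`D = Child(R) ∪ (X \ R)` the new state, removing `Child(R)` from `D` and re-inserting `R`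
recovers `X`. -/
theorem up_inverts_down (m : ℕ) {α : Type*} (P : RTree m) (lab : Fin m → α)
    (X : Set (Fin m)) (a : α)
    (hX : ∀ x ∈ X, ∀ z ∈ X, P.Anc x z → x = z) :
    (((({z | ∃ x ∈ {x ∈ X | lab x = a}, P.IsChild z x} ∪ (X \ {x ∈ X | lab x = a}))
        \ {z | ∃ x ∈ {x ∈ X | lab x = a}, P.IsChild z x})
      ∪ {x ∈ X | lab x = a}) : Set (Fin m)) = X := by
  ext v
  simp only [Set.mem_union, Set.mem_diff, Set.mem_setOf_eq, Set.mem_sep_iff]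
  constructor
  · rintro (⟨(h | ⟨hv, _⟩), _⟩ | ⟨hv, _⟩) <;> try exact hv
    exact absurd h ‹¬_›
  · intro hv
    by_cases hl : lab v = a
    · exact Or.inr ⟨hv, hl⟩
    · refine Or.inl ⟨Or.inr ⟨hv, fun h => hl h.2⟩, ?_⟩
      rintro ⟨x, ⟨hxX, _⟩, hpx, hne⟩
      exact hne (hX x hxX v hv ⟨1, hpx⟩).symm
end

section
/- Every rooted tree P on n nodes admits, for any integer parameter s > 1, a micro tree decomposition into connected subtrees M₁, …, M_k such that every node of P belongs to some Mᵢ, any two distinct micro trees intersect in at most one node which must be the root of at least one of them, each |V(Mᵢ)| ≤ s, and k = O(⌈n/s⌉) (it suffices to prove k ≤ 4⌈n/s⌉). -/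
open Finset
open scoped Classical

namespace RTree
variable {n : ℕ} (P : RTree n)
lemma anc_refl (v : Fin n) : P.Anc v v := ⟨0, rfl⟩
lemma anc_trans {x y z : Fin n} (h1 : P.Anc x y) (h2 : P.Anc y z) : P.Anc x z := by
  obtain ⟨j, hj⟩ := h1; obtain ⟨k, hk⟩ := h2
  exact ⟨j + k, by rw [Function.iterate_add_apply, hk, hj]⟩
lemma iterate_root (k : ℕ) : P.parent^[k] P.root = P.root :=
  Function.iterate_fixed P.parent_root k
lemma eq_root_of_cycle {v : Fin n} {k : ℕ} (hk : 1 ≤ k) (h : P.parent^[k] v = v) :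
    v = P.root := by
  obtain ⟨d, hd⟩ := P.wf v
  rcases Nat.eq_zero_or_pos d with h0 | h0
  · rw [h0] at hd; exact hd
  · have hcyc : ∀ m, P.parent^[m * k] v = v := by
      intro m; induction m with
      | zero => simp
      | succ m ih => rw [Nat.succ_mul, Function.iterate_add_apply, h, ih]
    have hdk : d ≤ d * k := Nat.le_mul_of_pos_right d hk
    have : P.parent^[d * k] v = P.root := by
      obtain ⟨e, he⟩ := Nat.exists_eq_add_of_le hdk
      rw [he, Nat.add_comm, Function.iterate_add_apply, hd, iterate_root]
    rw [hcyc d] at this; exact this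
lemma not_anc_child {c v : Fin n} (hc : P.IsChild c v) : ¬ P.Anc c v := by
  rintro ⟨k, hk⟩
  have hcyc : P.parent^[k + 1] v = v := by
    rw [Function.iterate_succ_apply', hk, hc.1]
  have hv := P.eq_root_of_cycle (Nat.le_add_left 1 k) hcyc
  rw [hv, iterate_root] at hk
  exact hc.2 (hk.symm.trans hv.symm)
lemma anc_root (v : Fin n) : P.Anc P.root v := P.wf v
lemma anc_parent_of_anc {c x : Fin n} (h : P.Anc c x) (hne : x ≠ c) :
    P.Anc c (P.parent x) := by
  obtain ⟨k, hk⟩ := h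
  rcases Nat.eq_zero_or_pos k with h0 | h0
  · rw [h0] at hk; exact absurd hk hne
  · obtain ⟨k', rfl⟩ := Nat.exists_eq_succ_of_ne_zero h0.ne'
    exact ⟨k', by rw [← Function.iterate_succ_apply, hk]⟩
lemma anc_of_anc_parent {c x : Fin n} (h : P.Anc c (P.parent x)) : P.Anc c x := by
  obtain ⟨k, hk⟩ := h
  exact ⟨k + 1, by rw [Function.iterate_succ_apply, hk]⟩
lemma anc_total {x x' y : Fin n} (h1 : P.Anc x y) (h2 : P.Anc x' y) :
    P.Anc x x' ∨ P.Anc x' x := by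
  obtain ⟨i, hi⟩ := h1; obtain ⟨j, hj⟩ := h2
  rcases le_total i j with h | h
  · right
    obtain ⟨e, rfl⟩ := Nat.exists_eq_add_of_le h
    refine ⟨e, ?_⟩
    rw [← hi, ← hj, Nat.add_comm i e, Function.iterate_add_apply]
  · left
    obtain ⟨e, rfl⟩ := Nat.exists_eq_add_of_le h
    refine ⟨e, ?_⟩
    rw [← hj, ← hi, Nat.add_comm j e, Function.iterate_add_apply]
lemma children_disjoint {c c' v y : Fin n} (hc : P.IsChild c v) (hc' : P.IsChild c' v)
    (hne : c ≠ c') (h1 : P.Anc c y) (h2 : P.Anc c' y) : False := by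
  rcases P.anc_total h1 h2 with h | h
  · have := P.anc_parent_of_anc h (Ne.symm hne)
    rw [hc'.1] at this
    exact P.not_anc_child hc this
  · have := P.anc_parent_of_anc h hne
    rw [hc.1] at this
    exact P.not_anc_child hc' this
end RTree

lemma exists_subset_sum {α : Type*} (f : α → ℕ) (h B : ℕ) (h1 : 1 ≤ h)
    (h2 : 2 * h - 2 ≤ B) (h3 : h ≤ B) (F : Finset α)
    (hbd : ∀ x ∈ F, 1 ≤ f x ∧ f x ≤ B) (hsum : h ≤ F.sum f) :
    ∃ S ⊆ F, h ≤ S.sum f ∧ S.sum f ≤ B := by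
  classical
  induction F using Finset.strongInduction with
  | _ F ih =>
    by_cases hex : ∃ a ∈ F, h ≤ f a
    · obtain ⟨a, haF, ha⟩ := hex
      exact ⟨{a}, Finset.singleton_subset_iff.mpr haF, by simpa using ha,
        by simpa using (hbd a haF).2⟩
    · push_neg at hex
      have hFne : F.Nonempty := by
        by_contra he
        rw [Finset.not_nonempty_iff_eq_empty] at he
        rw [he, Finset.sum_empty] at hsum; omega
      obtain ⟨a, haF⟩ := hFne
      by_cases hr : h ≤ (F.erase a).sum f
      · obtain ⟨S, hS, hS1, hS2⟩ := ih (F.erase a) (Finset.erase_ssubset haF)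
          (fun x hx => hbd x (Finset.mem_of_mem_erase hx)) hr
        exact ⟨S, hS.trans (Finset.erase_subset a F), hS1, hS2⟩
      · refine ⟨F, Finset.Subset.refl F, hsum, ?_⟩
        have heq : f a + (F.erase a).sum f = F.sum f := Finset.add_sum_erase F f haF
        have ha := hex a haF
        omega
lemma decomp {n : ℕ} (s : ℕ) (hs : 1 < s) (P : RTree n) :
    ∀ (N : ℕ) (R : Finset (Fin n)), R.card ≤ N → (∀ x ∈ R, P.parent x ∈ R) →
    ∃ (k : ℕ) (M : Fin k → Finset (Fin n)) (r : Fin k → Fin n),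
      (∀ i, r i ∈ M i) ∧
      (∀ i, M i ⊆ R) ∧
      (∀ i, ∀ x ∈ M i, x ≠ r i → P.parent x ∈ M i) ∧
      (∀ i, ∀ x ∈ M i, P.Anc (r i) x) ∧
      (∀ i, (M i).card ≤ s) ∧
      (∀ v ∈ R, ∃ i, v ∈ M i) ∧
      (∀ i j, i ≠ j → ∀ v, v ∈ M i → v ∈ M j → v = r i ∨ v = r j) ∧
      k ≤ (R.card + s / 2 - 1) / (s / 2) := by
  intro N
  induction N with
  | zero =>
    intro R hcard _
    have hR : R = ∅ := Finset.card_eq_zero.mp (Nat.le_zero.mp hcard)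
    subst hR
    exact ⟨0, fun i => i.elim0, fun i => i.elim0, fun i => i.elim0, fun i => i.elim0,
      fun i => i.elim0, fun i => i.elim0, fun i => i.elim0,
      fun v hv => absurd hv (Finset.notMem_empty v), fun i => i.elim0, Nat.zero_le _⟩
  | succ N ih =>
    intro R hcard hclosed
    have hiter : ∀ (k : ℕ) (x : Fin n), x ∈ R → P.parent^[k] x ∈ R := by
      intro k
      induction k with
      | zero => exact fun x hx => hx
      | succ k ihk =>
        intro x hx
        rw [Function.iterate_succ_apply]
        exact ihk _ (hclosed x hx)
    by_cases hsmall : R.card ≤ s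
    · rcases R.eq_empty_or_nonempty with rfl | ⟨x0, hx0⟩
      · exact ⟨0, fun i => i.elim0, fun i => i.elim0, fun i => i.elim0, fun i => i.elim0,
          fun i => i.elim0, fun i => i.elim0, fun i => i.elim0,
          fun v hv => absurd hv (Finset.notMem_empty v), fun i => i.elim0, Nat.zero_le _⟩
      · have hroot : P.root ∈ R := by
          obtain ⟨k, hk⟩ := P.wf x0
          rw [← hk]; exact hiter k x0 hx0
        refine ⟨1, fun _ => R, fun _ => P.root, fun _ => hroot,
          fun _ => Finset.Subset.refl R, fun _ x hx _ => hclosed x hx,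
          fun _ x _ => P.anc_root x, fun _ => hsmall, fun v hv => ⟨0, hv⟩,
          fun i j hij => absurd (Subsingleton.elim i j) hij, ?_⟩
        have h3 : 1 ≤ R.card := Finset.card_pos.mpr ⟨x0, hx0⟩
        rw [Nat.one_le_div_iff (by omega)]
        omega
    · push_neg at hsmall
      have hRne : R.Nonempty := Finset.card_pos.mp (by omega)
      obtain ⟨x0, hx0⟩ := hRne
      have hroot : P.root ∈ R := by
        obtain ⟨k, hk⟩ := P.wf x0
        rw [← hk]; exact hiter k x0 hx0
      -- minimal vertex with subtree size ≥ s
      have hrootA : P.root ∈ R.filter (fun v => s ≤ (R.filter (fun y => P.Anc v y)).card) := by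
        rw [Finset.mem_filter]
        refine ⟨hroot, ?_⟩
        have : R.filter (fun y => P.Anc P.root y) = R :=
          Finset.filter_true_of_mem (fun y _ => P.anc_root y)
        rw [this]; omega
      obtain ⟨v, hvA, hvmin⟩ := Finset.exists_min_image
        (R.filter (fun v => s ≤ (R.filter (fun y => P.Anc v y)).card))
        (fun v => (R.filter (fun y => P.Anc v y)).card) ⟨_, hrootA⟩
      rw [Finset.mem_filter] at hvA
      obtain ⟨hvR, hvsize⟩ := hvA
      have hvmem : v ∈ R.filter (fun y => P.Anc v y) :=
        Finset.mem_filter.mpr ⟨hvR, P.anc_refl v⟩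
      -- every child of v in R has subtree size in [1, s-1]
      have hchild : ∀ c ∈ R.filter (fun c => P.IsChild c v),
          1 ≤ (R.filter (fun y => P.Anc c y)).card ∧
          (R.filter (fun y => P.Anc c y)).card ≤ s - 1 := by
        intro c hcC
        rw [Finset.mem_filter] at hcC
        obtain ⟨hcR, hc⟩ := hcC
        have hancvc : P.Anc v c := ⟨1, by simpa using hc.1⟩
        constructor
        · exact Finset.card_pos.mpr ⟨c, Finset.mem_filter.mpr ⟨hcR, P.anc_refl c⟩⟩
        · by_contra hbig
          push_neg at hbig
          have hsub : R.filter (fun y => P.Anc c y) ⊆ (R.filter (fun y => P.Anc v y)).erase v := by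
            intro y hy
            rw [Finset.mem_filter] at hy
            refine Finset.mem_erase.mpr ⟨?_, Finset.mem_filter.mpr ⟨hy.1, P.anc_trans hancvc hy.2⟩⟩
            rintro rfl
            exact P.not_anc_child hc hy.2
          have hle := Finset.card_le_card hsub
          rw [Finset.card_erase_of_mem hvmem] at hle
          have hcA : c ∈ R.filter (fun v => s ≤ (R.filter (fun y => P.Anc v y)).card) :=
            Finset.mem_filter.mpr ⟨hcR, by omega⟩
          have := hvmin c hcA
          omega
      -- subtree of v is covered by v and children subtrees
      have hcover : R.filter (fun y => P.Anc v y) ⊆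
          insert v ((R.filter (fun c => P.IsChild c v)).biUnion
            (fun c => R.filter (fun y => P.Anc c y))) := by
        intro y hy
        rw [Finset.mem_filter] at hy
        obtain ⟨hyR, hanc⟩ := hy
        rcases eq_or_ne y v with rfl | hne
        · exact Finset.mem_insert_self _ _
        · have hex : ∃ k, P.parent^[k] y = v := hanc
          have hk0 : 1 ≤ Nat.find hex := by
            rcases Nat.eq_zero_or_pos (Nat.find hex) with h0 | h0
            · exfalso
              apply hne
              have hspec := Nat.find_spec hex
              rw [h0] at hspec
              simpa using hspec
            · exact h0
          have h11 : Nat.find hex - 1 + 1 = Nat.find hex := by omega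
          have hc1 : P.parent (P.parent^[Nat.find hex - 1] y) = v := by
            calc P.parent (P.parent^[Nat.find hex - 1] y)
                = P.parent^[Nat.find hex - 1 + 1] y :=
                  (Function.iterate_succ_apply' P.parent _ y).symm
              _ = v := by rw [h11]; exact Nat.find_spec hex
          have hc2 : P.parent^[Nat.find hex - 1] y ≠ v :=
            Nat.find_min hex (by omega)
          refine Finset.mem_insert_of_mem (Finset.mem_biUnion.mpr
            ⟨P.parent^[Nat.find hex - 1] y,
             Finset.mem_filter.mpr ⟨hiter _ y hyR, hc1, hc2⟩,
             Finset.mem_filter.mpr ⟨hyR, ⟨Nat.find hex - 1, rfl⟩⟩⟩)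
      have hsum : s - 1 ≤ (R.filter (fun c => P.IsChild c v)).sum
          (fun c => (R.filter (fun y => P.Anc c y)).card) := by
        have h1 := Finset.card_le_card hcover
        have h2 := Finset.card_insert_le v ((R.filter (fun c => P.IsChild c v)).biUnion
            (fun c => R.filter (fun y => P.Anc c y)))
        have h3 := Finset.card_biUnion_le (s := R.filter (fun c => P.IsChild c v))
          (t := fun c => R.filter (fun y => P.Anc c y))
        omega
      -- select a subset of children with sum in [s/2, s-1]
      obtain ⟨S, hSC, hS1, hS2⟩ := exists_subset_sum
        (fun c => (R.filter (fun y => P.Anc c y)).card) (s / 2) (s - 1)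
        (by omega) (by omega) (by omega)
        (R.filter (fun c => P.IsChild c v)) hchild (by omega)
      have hSchild : ∀ c ∈ S, c ∈ R ∧ P.IsChild c v := by
        intro c hc
        have := hSC hc
        rw [Finset.mem_filter] at this
        exact this
      -- D = union of selected subtrees
      set D := S.biUnion (fun c => R.filter (fun y => P.Anc c y)) with hD
      have hDcard : D.card = S.sum (fun c => (R.filter (fun y => P.Anc c y)).card) := by
        rw [hD]
        refine Finset.card_biUnion ?_
        intro c hc c' hc' hne
        rw [Function.onFun, Finset.disjoint_left]
        intro y hy hy'
        rw [Finset.mem_filter] at hy hy'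
        exact P.children_disjoint (hSchild c hc).2 (hSchild c' hc').2 hne hy.2 hy'.2
      have hDR : D ⊆ R := by
        intro y hy
        rw [hD, Finset.mem_biUnion] at hy
        obtain ⟨c, _, hy⟩ := hy
        exact (Finset.mem_filter.mp hy).1
      have hvD : v ∉ D := by
        intro hv
        rw [hD, Finset.mem_biUnion] at hv
        obtain ⟨c, hc, hv⟩ := hv
        exact P.not_anc_child (hSchild c hc).2 (Finset.mem_filter.mp hv).2
      have hDanc : ∀ y ∈ D, P.Anc v y ∧ (y ≠ v → P.parent y ∈ insert v D) := by
        intro y hy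
        rw [hD, Finset.mem_biUnion] at hy
        obtain ⟨c, hcS, hy'⟩ := hy
        rw [Finset.mem_filter] at hy'
        obtain ⟨hyR, hancy⟩ := hy'
        have hcv := (hSchild c hcS).2
        have hancvc : P.Anc v c := ⟨1, by simpa using hcv.1⟩
        refine ⟨P.anc_trans hancvc hancy, ?_⟩
        intro _
        rcases eq_or_ne y c with rfl | hyc
        · rw [hcv.1]; exact Finset.mem_insert_self _ _
        · refine Finset.mem_insert_of_mem ?_
          rw [hD, Finset.mem_biUnion]
          exact ⟨c, hcS, Finset.mem_filter.mpr ⟨hclosed y hyR,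
            P.anc_parent_of_anc hancy hyc⟩⟩
      -- recurse on R \ D
      have hclosed' : ∀ x ∈ R \ D, P.parent x ∈ R \ D := by
        intro x hx
        rw [Finset.mem_sdiff] at hx
        obtain ⟨hxR, hxD⟩ := hx
        rw [Finset.mem_sdiff]
        refine ⟨hclosed x hxR, ?_⟩
        intro hpD
        rw [hD, Finset.mem_biUnion] at hpD
        obtain ⟨c, hcS, hp⟩ := hpD
        rw [Finset.mem_filter] at hp
        refine hxD ?_
        rw [hD, Finset.mem_biUnion]
        exact ⟨c, hcS, Finset.mem_filter.mpr ⟨hxR, P.anc_of_anc_parent hp.2⟩⟩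
      have hcard' : (R \ D).card = R.card - D.card := Finset.card_sdiff_of_subset hDR
      have hDpos : s / 2 ≤ D.card := by rw [hDcard]; exact hS1
      have hcard'' : (R \ D).card ≤ N := by
        have := Finset.card_le_card hDR
        omega
      obtain ⟨k', M', r', p1, p2, p3, p4, p5, p6, p7, p8⟩ := ih (R \ D) hcard'' hclosed'
      -- combine
      refine ⟨k' + 1, Fin.cons (insert v D) M', Fin.cons v r', ?_, ?_, ?_, ?_, ?_, ?_, ?_, ?_⟩
      · intro i
        refine Fin.cases ?_ ?_ i
        · simp
        · intro j; simpa using p1 j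
      · intro i
        refine Fin.cases ?_ ?_ i
        · simp only [Fin.cons_zero]
          exact Finset.insert_subset hvR hDR
        · intro j
          simp only [Fin.cons_succ]
          exact (p2 j).trans (Finset.sdiff_subset)
      · intro i
        refine Fin.cases ?_ ?_ i
        · simp only [Fin.cons_zero]
          intro x hx hne
          rcases Finset.mem_insert.mp hx with rfl | hxD
          · exact absurd rfl hne
          · exact ((hDanc x hxD).2 hne)
        · intro j
          simpa using p3 j
      · intro i
        refine Fin.cases ?_ ?_ i
        · simp only [Fin.cons_zero]
          intro x hx
          rcases Finset.mem_insert.mp hx with rfl | hxD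
          · exact P.anc_refl x
          · exact (hDanc x hxD).1
        · intro j
          simpa using p4 j
      · intro i
        refine Fin.cases ?_ ?_ i
        · simp only [Fin.cons_zero]
          rw [Finset.card_insert_of_notMem hvD, hDcard]
          omega
        · intro j
          simpa using p5 j
      · intro w hw
        by_cases hwD : w ∈ D
        · exact ⟨0, by simpa using Finset.mem_insert_of_mem hwD⟩
        · obtain ⟨j, hj⟩ := p6 w (Finset.mem_sdiff.mpr ⟨hw, hwD⟩)
          exact ⟨j.succ, by simpa using hj⟩
      · intro i j hij w hwi hwj
        rcases Fin.eq_zero_or_eq_succ i with rfl | ⟨i', rfl⟩ <;>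
          rcases Fin.eq_zero_or_eq_succ j with rfl | ⟨j', rfl⟩
        · exact absurd rfl hij
        · left
          simp only [Fin.cons_zero] at hwi ⊢
          simp only [Fin.cons_succ] at hwj
          have hwR' := p2 j' hwj
          rw [Finset.mem_sdiff] at hwR'
          rcases Finset.mem_insert.mp hwi with rfl | hwD
          · rfl
          · exact absurd hwD hwR'.2
        · right
          simp only [Fin.cons_zero] at hwj ⊢
          simp only [Fin.cons_succ] at hwi
          have hwR' := p2 i' hwi
          rw [Finset.mem_sdiff] at hwR'
          rcases Finset.mem_insert.mp hwj with rfl | hwD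
          · rfl
          · exact absurd hwD hwR'.2
        · have hij' : i' ≠ j' := fun h => hij (by rw [h])
          simp only [Fin.cons_succ] at hwi hwj
          rcases p7 i' j' hij' w hwi hwj with h | h
          · left; simpa using h
          · right; simpa using h
      · have hstep : (R \ D).card + s / 2 ≤ R.card := by
          have := Finset.card_le_card hDR
          omega
        have h2pos : 0 < s / 2 := by omega
        calc k' + 1 ≤ ((R \ D).card + s / 2 - 1) / (s / 2) + 1 := by omega
          _ = ((R \ D).card + s / 2 - 1 + s / 2) / (s / 2) := (Nat.add_div_right _ h2pos).symm
          _ ≤ (R.card + s / 2 - 1) / (s / 2) := Nat.div_le_div_right (by omega)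

lemma arith_bound (k q h s n : ℕ) (hh : 1 ≤ h) (hs2 : s ≤ 2 * h + 1)
    (hn : n ≤ s * q) (hk : k ≤ (n + h - 1) / h) : k ≤ 4 * q := by
  rcases Nat.eq_zero_or_pos n with rfl | hn1
  · have h0 : (0 + h - 1) / h = 0 := Nat.div_eq_of_lt (by omega)
    omega
  · have hk' : k * h ≤ n + h - 1 := (Nat.le_div_iff_mul_le hh).mp hk
    have h1 : n ≤ 2 * (q * h) + q := by
      calc n ≤ s * q := hn
        _ ≤ (2 * h + 1) * q := Nat.mul_le_mul_right q hs2
        _ = 2 * (q * h) + q := by ring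
    have h2 : q ≤ q * h := Nat.le_mul_of_pos_right q (by omega)
    by_contra hcon
    push_neg at hcon
    have h3 : (4 * q + 1) * h ≤ k * h := Nat.mul_le_mul_right h (by omega)
    rw [show (4 * q + 1) * h = 4 * (q * h) + h from by ring] at h3
    set A := q * h
    set B := k * h
    omega

/-- Gabow–Tarjan clustering (Lemma 8): every rooted tree on `n` nodes has, for any
parameter `s > 1`, a micro tree decomposition into connected subtrees of size at most `s`,
any two of which intersect in at most one node which is a root of one of them, covering
all nodes, with at most `4⌈n/s⌉` micro trees. -/
theorem micro_tree_decomposition (n s : ℕ) (hs : 1 < s) (P : RTree n) :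
    ∃ (k : ℕ) (M : Fin k → Finset (Fin n)) (r : Fin k → Fin n),
      (∀ i, r i ∈ M i) ∧
      (∀ i, ∀ x ∈ M i, x ≠ r i → P.parent x ∈ M i) ∧
      (∀ i, ∀ x ∈ M i, P.Anc (r i) x) ∧
      (∀ i, (M i).card ≤ s) ∧
      (∀ v, ∃ i, v ∈ M i) ∧
      (∀ i j, i ≠ j → ∀ v, v ∈ M i → v ∈ M j → v = r i ∨ v = r j) ∧
      k ≤ 4 * ((n + s - 1) / s) := by
  obtain ⟨k, M, r, p1, p2, p3, p4, p5, p6, p7, p8⟩ :=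
    decomp s hs P n Finset.univ (by simp) (fun x _ => Finset.mem_univ _)
  rw [Finset.card_univ, Fintype.card_fin] at p8
  refine ⟨k, M, r, p1, p3, p4, p5, fun v => p6 v (Finset.mem_univ v), p7, ?_⟩
  have hq : n ≤ s * ((n + s - 1) / s) := by
    have h1 := Nat.div_add_mod (n + s - 1) s
    have h2 : (n + s - 1) % s < s := Nat.mod_lt _ (by omega)
    set m := s * ((n + s - 1) / s)
    set r2 := (n + s - 1) % s
    omega
  exact arith_bound k ((n + s - 1) / s) (s / 2) s n (by omega) (by omega) hq p8
end
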